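/- Let R be a commutative ring, p a prime, and M a free R-module with basis {e_s}_{s ∈ S}. Under the cyclic permutation action of C_p on M^{⊗p}, there is a C_p-stable direct sum decomposition M^{⊗p} = M₁ ⊕ M₂, where M₁ is the free R-submodule with basis {e_s^{⊗p} : s ∈ S}, on which C_p acts trivially, and M₂ is the R-submodule spanned by the basis tensors e_{s₁} ⊗ ⋯ ⊗ e_{s_p} in which not all indices s_i are equal, and M₂ is a free module over the group ring R[C_p]. -/

import Mathlib

/-!
Statement 5: Let `R` be a commutative ring, `p` a prime, and `M` a free `R`-module with basis
`{e_s}`.  Under the cyclic permutation action of `C_p` on `M^{⊗p}` there is a `C_p`-stable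
decomposition `M^{⊗p} = M₁ ⊕ M₂`, where `M₁` is the free submodule with basis
`{e_s^{⊗p}}` on which `C_p` acts trivially, `M₂` is the span of the mixed basis tensors,
and `M₂` is free as a module over the group ring `R[C_p]` (expressed by exhibiting an
`R`-basis of `M₂` indexed by `C_p × J` which the generator of `C_p` permutes freely).
-/

open scoped TensorProduct

universe u v w

section TensorBasis

open PiTensorProduct

variable {R : Type u} [CommRing R] {S : Type v} {M : Type w} [AddCommGroup M] [Module R M]

noncomputable def tpFunctional (n : ℕ) (b : Module.Basis S R M) (f₀ : Fin n → S) :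
    (⨂[R] (_ : Fin n), M) →ₗ[R] R :=
  PiTensorProduct.lift
    ((MultilinearMap.mkPiAlgebra R (Fin n) R).compLinearMap fun i => b.coord (f₀ i))

open scoped Classical in
lemma tpFunctional_tprod (n : ℕ) (b : Module.Basis S R M) (f₀ f : Fin n → S) :
    tpFunctional n b f₀ (⨂ₜ[R] i, b (f i)) = if f = f₀ then 1 else 0 := by
  classical
  rw [tpFunctional, lift.tprod, MultilinearMap.compLinearMap_apply,
    MultilinearMap.mkPiAlgebra_apply]
  by_cases h : f = f₀
  · subst h
    rw [if_pos rfl]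
    apply Finset.prod_eq_one
    intro i _
    simp [Module.Basis.coord_apply, Module.Basis.repr_self]
  · rw [if_neg h]
    obtain ⟨i, hi⟩ := Function.ne_iff.mp h
    refine Finset.prod_eq_zero (Finset.mem_univ i) ?_
    simp [Module.Basis.coord_apply, Module.Basis.repr_self, Finsupp.single_apply, hi, Ne.symm hi]

lemma tp_li (n : ℕ) (b : Module.Basis S R M) :
    LinearIndependent R (fun f : Fin n → S => ⨂ₜ[R] i, b (f i)) := by
  classical
  rw [linearIndependent_iff]
  intro l hl
  ext f₀
  have h := congrArg (tpFunctional n b f₀) hl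
  rw [map_zero, Finsupp.apply_linearCombination] at h
  rw [Finsupp.linearCombination_apply, Finsupp.sum] at h
  simp only [Function.comp, tpFunctional_tprod, smul_eq_mul, mul_ite, mul_one, mul_zero] at h
  classical
  rw [Finset.sum_ite_eq' l.support f₀ fun f => l f] at h
  by_cases hf : f₀ ∈ l.support
  · rw [if_pos hf] at h
    simpa using h
  · simpa using Finsupp.notMem_support_iff.mp hf

lemma tp_span (n : ℕ) (b : Module.Basis S R M) :
    ⊤ ≤ Submodule.span R (Set.range fun f : Fin n → S => ⨂ₜ[R] i, b (f i)) := by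
  classical
  rw [← PiTensorProduct.span_tprod_eq_top (R := R) (s := fun _ : Fin n => M), Submodule.span_le]
  rintro x ⟨m, rfl⟩
  have hm : m = fun i => ∑ s ∈ (b.repr (m i)).support, b.repr (m i) s • b s := by
    funext i
    conv_lhs => rw [← b.linearCombination_repr (m i)]
    rw [Finsupp.linearCombination_apply, Finsupp.sum]
  rw [hm, MultilinearMap.map_sum_finset (PiTensorProduct.tprod R) (g := fun i s => b.repr (m i) s • b s)
    (A := fun i => (b.repr (m i)).support)]
  apply Submodule.sum_mem
  intro r _
  rw [(PiTensorProduct.tprod R).map_smul_univ]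
  exact Submodule.smul_mem _ _ (Submodule.subset_span ⟨fun i => r i, rfl⟩)

noncomputable def tpBasis (n : ℕ) (b : Module.Basis S R M) :
    Module.Basis (Fin n → S) R (⨂[R] (_ : Fin n), M) :=
  Module.Basis.mk (tp_li n b) (tp_span n b)

lemma tpBasis_apply (n : ℕ) (b : Module.Basis S R M) (f : Fin n → S) :
    tpBasis n b f = ⨂ₜ[R] i, b (f i) :=
  Module.Basis.mk_apply _ _ _

end TensorBasis

section SpanImage

variable {R : Type*} [CommRing R] {ι : Type*} {N : Type*} [AddCommGroup N] [Module R N]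

noncomputable def basisSpanImage (c : Module.Basis ι R N) (t : Set ι) :
    Module.Basis t R (Submodule.span R (c '' t)) :=
  (Module.Basis.span (c.linearIndependent.comp ((↑) : t → ι) Subtype.val_injective)).map
    (LinearEquiv.ofEq _ _ (by rw [Set.range_comp, Subtype.range_coe]))

lemma basisSpanImage_apply (c : Module.Basis ι R N) (t : Set ι) (i : t) :
    (basisSpanImage c t i : N) = c i := by
  rw [basisSpanImage, Module.Basis.map_apply, LinearEquiv.coe_ofEq_apply]
  exact congrArg Subtype.val (Module.Basis.span_apply (hli := c.linearIndependent.comp ((↑) : t → ι) Subtype.val_injective) i)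

lemma isCompl_span_image (c : Module.Basis ι R N) (t : Set ι) :
    IsCompl (Submodule.span R (c '' t)) (Submodule.span R (c '' tᶜ)) := by
  constructor
  · rw [Submodule.disjoint_def]
    intro x h1 h2
    rw [Module.Basis.mem_span_image] at h1 h2
    have hz : c.repr x = 0 := by
      ext i
      by_contra hne
      have hi : i ∈ (c.repr x).support := Finsupp.mem_support_iff.mpr hne
      exact (h2 hi) (h1 hi)
    have := congrArg c.repr.symm hz
    rwa [c.repr.symm_apply_apply, map_zero] at this
  · rw [codisjoint_iff, ← Submodule.span_union, ← Set.image_union, Set.union_compl_self,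
      Set.image_univ, c.span_eq]

end SpanImage
section Rotation

universe v'

variable {S : Type v'}

lemma orderOf_finRotate_prime {p : ℕ} (hp : p.Prime) : orderOf (finRotate p) = p := by
  rw [← Equiv.Perm.lcm_cycleType, cycleType_finRotate_of_le hp.two_le]
  simp

open Fin.NatCast Fin.CommRing in
lemma const_of_comp_finRotate {p : ℕ} (hp : 0 < p) (f : Fin p → S)
    (h : ∀ x, f (finRotate p x) = f x) : ∀ i j, f i = f j := by
  obtain ⟨n, rfl⟩ := Nat.exists_eq_succ_of_ne_zero hp.ne'
  have key : ∀ (k : ℕ) (i : Fin (n + 1)), f (i + (k : Fin (n + 1))) = f i := by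
    intro k
    induction k with
    | zero => intro i; simp
    | succ k ih =>
      intro i
      have h2 : (i + ((k + 1 : ℕ) : Fin (n + 1))) = finRotate (n + 1) (i + (k : Fin (n + 1))) := by
        rw [finRotate_succ_apply]
        push_cast
        ring
      rw [h2, h, ih]
  intro i j
  have h3 : j = i + (((j - i).val : ℕ) : Fin (n + 1)) := by
    rw [Fin.cast_val_eq_self]
    ring
  rw [h3, key]

variable (p : ℕ)

/-- The action of `k : ZMod p` on functions `Fin p → S` by precomposition with the
`k`-th power of the inverse rotation. -/
def cAct (k : ZMod p) (f : Fin p → S) : Fin p → S :=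
  f ∘ ⇑((finRotate p)⁻¹ ^ k.val)

lemma orderOf_inv_finRotate {p : ℕ} (hp : p.Prime) : orderOf ((finRotate p)⁻¹) = p := by
  rw [orderOf_inv]; exact orderOf_finRotate_prime hp

variable {p}

lemma pow_mod_p (hp : p.Prime) (m : ℕ) :
    (finRotate p)⁻¹ ^ (m % p) = (finRotate p)⁻¹ ^ m := by
  have h0 : m % p = m % orderOf ((finRotate p)⁻¹) := by rw [orderOf_inv_finRotate hp]
  rw [h0, pow_mod_orderOf]

lemma cAct_zero (hp : p.Prime) (f : Fin p → S) : cAct p (0 : ZMod p) f = f := by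
  haveI : NeZero p := ⟨hp.pos.ne'⟩
  rw [cAct, ZMod.val_zero, pow_zero]
  rfl

lemma cAct_add (hp : p.Prime) (k l : ZMod p) (f : Fin p → S) :
    cAct p (k + l) f = cAct p k (cAct p l f) := by
  haveI : NeZero p := ⟨hp.pos.ne'⟩
  have h1 : (finRotate p)⁻¹ ^ (k + l).val
      = (finRotate p)⁻¹ ^ l.val * (finRotate p)⁻¹ ^ k.val := by
    rw [ZMod.val_add, pow_mod_p hp, ← pow_add, add_comm k.val l.val]
  show f ∘ ⇑((finRotate p)⁻¹ ^ (k + l).val) = _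
  rw [h1]
  rfl

lemma cAct_succ (hp : p.Prime) (k : ZMod p) (f : Fin p → S) :
    cAct p (k + 1) f = cAct p k f ∘ ⇑((finRotate p)⁻¹) := by
  haveI : NeZero p := ⟨hp.pos.ne'⟩
  haveI : Fact (1 < p) := ⟨hp.one_lt⟩
  have h1 : (finRotate p)⁻¹ ^ (k + 1).val
      = (finRotate p)⁻¹ ^ k.val * (finRotate p)⁻¹ := by
    rw [ZMod.val_add, ZMod.val_one, pow_mod_p hp, pow_succ]
  show f ∘ ⇑((finRotate p)⁻¹ ^ (k + 1).val) = _
  rw [h1]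
  rfl

lemma cAct_nonconst (hp : p.Prime) (k : ZMod p) (f : Fin p → S)
    (hf : ¬ ∀ i j, f i = f j) : ¬ ∀ i j, cAct p k f i = cAct p k f j := by
  intro h
  apply hf
  intro i j
  have h2 := h ((((finRotate p)⁻¹ ^ k.val)).symm i) ((((finRotate p)⁻¹ ^ k.val)).symm j)
  simpa only [cAct, Function.comp_apply, Equiv.apply_symm_apply] using h2

lemma cAct_free (hp : p.Prime) (k : ZMod p) (f : Fin p → S)
    (hf : ¬ ∀ i j, f i = f j) (hfix : cAct p k f = f) : k = 0 := by
  haveI : NeZero p := ⟨hp.pos.ne'⟩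
  haveI := Fact.mk hp
  by_contra hk
  -- iterates of the action fix `f`
  have hiter : ∀ n : ℕ, cAct p ((n : ZMod p) * k) f = f := by
    intro n
    induction n with
    | zero => simpa using cAct_zero hp f
    | succ n ih =>
      push_cast
      rw [add_mul, one_mul, cAct_add hp, hfix, ih]
  -- pick `n` with `(n : ZMod p) * k = 1`
  have h1 : cAct p (1 : ZMod p) f = f := by
    have := hiter (k⁻¹).val
    rwa [ZMod.natCast_val, ZMod.cast_id, inv_mul_cancel₀ hk] at this
  -- hence `f` is invariant under `finRotate p`
  have h2 : ∀ x, f (finRotate p x) = f x := by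
    intro x
    haveI : Fact (1 < p) := ⟨hp.one_lt⟩
    have h3 : cAct p (1 : ZMod p) f (finRotate p x)
        = f ((finRotate p)⁻¹ (finRotate p x)) := by
      rw [cAct, ZMod.val_one, pow_one]
      rfl
    rw [h1] at h3
    rw [h3, Equiv.Perm.inv_def, Equiv.symm_apply_apply]
  exact hf (const_of_comp_finRotate hp.pos f h2)

variable (p) in
/-- The setoid on non-constant functions: orbit equivalence for the cyclic action. -/
def cSetoid (hp : p.Prime) : Setoid {f : Fin p → S // ¬ ∀ i j, f i = f j} where
  r x y := ∃ k : ZMod p, cAct p k x.1 = y.1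
  iseqv := by
    constructor
    · exact fun x => ⟨0, cAct_zero hp x.1⟩
    · rintro x y ⟨k, hk⟩
      exact ⟨-k, by rw [← hk, ← cAct_add hp, neg_add_cancel, cAct_zero hp]⟩
    · rintro x y z ⟨k, hk⟩ ⟨l, hl⟩
      exact ⟨l + k, by rw [cAct_add hp, hk, hl]⟩

variable (p) in
/-- Non-constant functions are in bijection with `ZMod p × (orbit set)`. -/
noncomputable def cEquiv (hp : p.Prime) :
    ZMod p × Quotient (cSetoid p (S := S) hp) ≃ {f : Fin p → S // ¬ ∀ i j, f i = f j} :=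
  Equiv.ofBijective
    (fun kq => ⟨cAct p kq.1 kq.2.out.1, fun h => cAct_nonconst hp kq.1 _ kq.2.out.2 h⟩) <| by
    constructor
    · rintro ⟨k, q⟩ ⟨k', q'⟩ h
      have h1 : cAct p k q.out.1 = cAct p k' q'.out.1 := congrArg Subtype.val h
      have hqq : q = q' := by
        rw [← q.out_eq, ← q'.out_eq]
        refine Quotient.sound ⟨-k' + k, ?_⟩
        rw [cAct_add hp, h1, ← cAct_add hp, neg_add_cancel, cAct_zero hp]
      subst hqq
      have h2 : cAct p (-k' + k) q.out.1 = q.out.1 := by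
        rw [cAct_add hp, h1, ← cAct_add hp, neg_add_cancel, cAct_zero hp]
      have h3 : -k' + k = 0 := cAct_free hp _ _ q.out.2 h2
      have h4 : k = k' := by linear_combination h3
      rw [h4]
    · intro f
      obtain ⟨k, hk⟩ := Quotient.mk_out (s := cSetoid p (S := S) hp) f
      exact ⟨(k, ⟦f⟧), Subtype.ext hk⟩

lemma cEquiv_apply_val (hp : p.Prime) (k : ZMod p) (q : Quotient (cSetoid p (S := S) hp)) :
    ((cEquiv p hp (k, q) : {f : Fin p → S // ¬ ∀ i j, f i = f j}) : Fin p → S)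
      = cAct p k q.out.1 := rfl

lemma cEquiv_succ (hp : p.Prime) (k : ZMod p) (q : Quotient (cSetoid p (S := S) hp)) :
    ((cEquiv p hp (k + 1, q)).1 : Fin p → S)
      = (cEquiv p hp (k, q)).1 ∘ ⇑((finRotate p)⁻¹) := by
  rw [cEquiv_apply_val, cEquiv_apply_val, cAct_succ hp]

end Rotation

theorem cyclic_decomposition_of_tensor_power
    (R : Type u) [CommRing R] (p : ℕ) (hp : p.Prime)
    (S : Type v) (M : Type w) [AddCommGroup M] [Module R M] (b : Module.Basis S R M) :
    -- the generator of `C_p` acting on `M^{⊗p}` by cyclic permutation of the factors: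
    let σ : (⨂[R] (_ : Fin p), M) ≃ₗ[R] ⨂[R] (_ : Fin p), M :=
      PiTensorProduct.reindex R (fun _ : Fin p => M) (finRotate p)
    -- `M₁` is the span of the basis tensors `e_s ⊗ ⋯ ⊗ e_s`:
    let M₁ : Submodule R (⨂[R] (_ : Fin p), M) :=
      Submodule.span R (Set.range fun s : S => ⨂ₜ[R] (_ : Fin p), b s)
    -- `M₂` is the span of the basis tensors `e_{s₁} ⊗ ⋯ ⊗ e_{s_p}` with not all `sᵢ` equal:
    let M₂ : Submodule R (⨂[R] (_ : Fin p), M) :=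
      Submodule.span R
        {x | ∃ f : Fin p → S, (¬ ∀ i j : Fin p, f i = f j) ∧ x = ⨂ₜ[R] i, b (f i)}
    -- `M^{⊗p} = M₁ ⊕ M₂`:
    IsCompl M₁ M₂ ∧
    -- `M₁` is free with basis `{e_s^{⊗p} : s ∈ S}`:
    (∃ w₁ : Module.Basis S R M₁, ∀ s : S, (w₁ s : ⨂[R] (_ : Fin p), M) = ⨂ₜ[R] (_ : Fin p), b s) ∧
    -- `C_p` acts trivially on `M₁`:
    (∀ x ∈ M₁, σ x = x) ∧
    -- `M₂` is `C_p`-stable: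
    (∀ x ∈ M₂, σ x ∈ M₂) ∧
    -- `M₂` is a free `R[C_p]`-module: it admits an `R`-basis indexed by `C_p × J`
    -- freely permuted by the generator `σ`:
    (∃ (J : Type (max u v w)) (w₂ : Module.Basis (ZMod p × J) R M₂),
      ∀ (i : ZMod p) (j : J),
        σ ((w₂ (i, j) : ⨂[R] (_ : Fin p), M)) = (w₂ (i + 1, j) : ⨂[R] (_ : Fin p), M)) := by
  classical
  intro σ M₁ M₂
  haveI : NeZero p := ⟨hp.pos.ne'⟩
  -- the action of `σ` on basis vectors
  have hσB : ∀ f : Fin p → S,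
      σ (tpBasis p b f) = tpBasis p b (f ∘ ⇑(finRotate p).symm) := by
    intro f
    show PiTensorProduct.reindex R (fun _ : Fin p => M) (finRotate p) (tpBasis p b f) = _
    rw [tpBasis_apply, tpBasis_apply, PiTensorProduct.reindex_tprod]
    rfl
  have hM₁ : M₁ = Submodule.span R
      (tpBasis p b '' {f : Fin p → S | ∀ i j, f i = f j}) := by
    show Submodule.span R _ = _
    congr 1
    ext x
    constructor
    · rintro ⟨s, rfl⟩
      exact ⟨fun _ => s, fun i j => rfl, tpBasis_apply p b _⟩
    · rintro ⟨f, hf, rfl⟩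
      refine ⟨f ⟨0, hp.pos⟩, ?_⟩
      rw [tpBasis_apply]
      exact congrArg (PiTensorProduct.tprod R)
        (funext fun i => congrArg b (hf ⟨0, hp.pos⟩ i))
  have hM₂ : M₂ = Submodule.span R
      (tpBasis p b '' {f : Fin p → S | ∀ i j, f i = f j}ᶜ) := by
    show Submodule.span R _ = _
    congr 1
    ext x
    constructor
    · rintro ⟨f, hf, rfl⟩
      exact ⟨f, hf, tpBasis_apply p b f⟩
    · rintro ⟨f, hf, rfl⟩
      exact ⟨f, hf, tpBasis_apply p b f⟩
  refine ⟨?_, ?_, ?_, ?_, ?_⟩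
  · -- `IsCompl M₁ M₂`
    rw [hM₁, hM₂]
    exact isCompl_span_image (tpBasis p b) _
  · -- the basis of `M₁`
    let eS : ↥{f : Fin p → S | ∀ i j, f i = f j} ≃ S :=
      { toFun := fun f => f.1 ⟨0, hp.pos⟩
        invFun := fun s => ⟨fun _ => s, fun i j => rfl⟩
        left_inv := fun f => Subtype.ext (funext fun i => f.2 ⟨0, hp.pos⟩ i)
        right_inv := fun s => rfl }
    refine ⟨((basisSpanImage (tpBasis p b) _).map
      (LinearEquiv.ofEq _ _ hM₁.symm)).reindex eS, ?_⟩
    intro s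
    rw [Module.Basis.reindex_apply, Module.Basis.map_apply, LinearEquiv.coe_ofEq_apply,
      basisSpanImage_apply]
    exact tpBasis_apply p b _
  · -- trivial action on `M₁`
    intro x hx
    rw [hM₁] at hx
    induction hx using Submodule.span_induction with
    | mem y hy =>
      obtain ⟨f, hf, rfl⟩ := hy
      rw [hσB f]
      exact congrArg (tpBasis p b) (funext fun i => hf _ _)
    | zero => simp
    | add y z _ _ h1 h2 => rw [map_add, h1, h2]
    | smul r y _ h1 => rw [map_smul, h1]
  · -- stability of `M₂`
    intro x hx
    rw [hM₂] at hx ⊢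
    induction hx using Submodule.span_induction with
    | mem y hy =>
      obtain ⟨f, hf, rfl⟩ := hy
      rw [hσB f]
      refine Submodule.subset_span ⟨f ∘ ⇑(finRotate p).symm, ?_, rfl⟩
      intro h
      apply hf
      intro i j
      have h2 := h (finRotate p i) (finRotate p j)
      simpa using h2
    | zero => rw [map_zero]; exact Submodule.zero_mem _
    | add y z _ _ h1 h2 => rw [map_add]; exact Submodule.add_mem _ h1 h2
    | smul r y _ h1 => rw [map_smul]; exact Submodule.smul_mem _ _ h1
  · -- freeness of `M₂` over `R[C_p]`
    refine ⟨ULift.{max u w} (Quotient (cSetoid p (S := S) hp)), ?_⟩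
    let Φ : (ZMod p × ULift.{max u w} (Quotient (cSetoid p (S := S) hp)))
        ≃ ↥({f : Fin p → S | ∀ i j, f i = f j}ᶜ) :=
      (Equiv.prodCongr (Equiv.refl _) Equiv.ulift).trans (cEquiv p hp)
    refine ⟨((basisSpanImage (tpBasis p b) _).map
      (LinearEquiv.ofEq _ _ hM₂.symm)).reindex Φ.symm, ?_⟩
    intro i j
    rw [Module.Basis.reindex_apply, Module.Basis.reindex_apply, Equiv.symm_symm,
      Module.Basis.map_apply, Module.Basis.map_apply, LinearEquiv.coe_ofEq_apply,
      LinearEquiv.coe_ofEq_apply, basisSpanImage_apply, basisSpanImage_apply, hσB]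
    exact (congrArg (tpBasis p b) (cEquiv_succ hp i j.down)).symm
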